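/- Let $r \ge 2$, let $p \ge 2$, and let $A$ be a symmetric nonnegative $r$-matrix of order $n$ with slice-sums $S_1, \ldots, S_n$. Then $\rho^{(p)}(A) \ge n^{1 - r/p} \left( \frac{1}{n} \left( S_1^{p/(p-1)} + \cdots + S_n^{p/(p-1)} \right) \right)^{(p-1)/p}$. -/

import Mathlib

open Finset

/-- The `ℓ^p` norm of a vector in `ℝ^n`. -/
noncomputable def lpNorm {n : ℕ} (p : ℝ) (x : Fin n → ℝ) : ℝ :=
  (∑ i, |x i| ^ p) ^ (1 / p)

/-- The linear form of a cubical `r`-matrix `A` of order `n`. -/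
noncomputable def linFormC {r n : ℕ} (A : (Fin r → Fin n) → ℝ)
    (x : Fin r → Fin n → ℝ) : ℝ :=
  ∑ i : Fin r → Fin n, A i * ∏ t, x t (i t)

/-- The `p`-spectral radius of a cubical `r`-matrix:
`ρ⁽ᵖ⁾(A) = max_{|x|_p = 1} |L_A(x, …, x)|`. -/
noncomputable def pSpecRad {r n : ℕ} (p : ℝ) (A : (Fin r → Fin n) → ℝ) : ℝ :=
  sSup {v | ∃ x : Fin n → ℝ, lpNorm p x = 1 ∧ v = |linFormC A (fun _ => x)|}

/-- The slice-sums of a cubical `r`-matrix: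
`S_a = ∑_{i₂,…,i_r} a_{a,i₂,…,i_r}`. -/
noncomputable def sliceSum {r n : ℕ} (hr : 0 < r) (A : (Fin r → Fin n) → ℝ)
    (a : Fin n) : ℝ :=
  ∑ i : Fin r → Fin n, if i ⟨0, hr⟩ = a then A i else 0

lemma concave_rpow_aux {q : ℝ} (hq0 : 0 < q) (hq1 : q ≤ 1) {θ a b : ℝ}
    (hθ0 : 0 ≤ θ) (hθ1 : θ ≤ 1) (ha : 0 ≤ a) (hb : 0 ≤ b) :
    θ * a ^ q + (1 - θ) * b ^ q ≤ (θ * a + (1 - θ) * b) ^ q := by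
  have h := (Real.concaveOn_rpow hq0.le hq1).2 (Set.mem_Ici.2 ha) (Set.mem_Ici.2 hb)
    hθ0 (by linarith : (0:ℝ) ≤ 1 - θ) (by ring : θ + (1 - θ) = 1)
  simpa [smul_eq_mul] using h

lemma mix_pointwise {p : ℝ} (hp : 2 ≤ p) {θ A1 B1 A2 B2 : ℝ} (hθ0 : 0 ≤ θ) (hθ1 : θ ≤ 1)
    (hA1 : 0 ≤ A1) (hB1 : 0 ≤ B1) (hA2 : 0 ≤ A2) (hB2 : 0 ≤ B2) :
    (A1 * B2) ^ (1 / p) + (A2 * B1) ^ (1 / p) ≤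
      (θ * A1 + (1 - θ) * B1) ^ (1 / p) * ((1 - θ) * A2 + θ * B2) ^ (1 / p)
        + (θ * A2 + (1 - θ) * B2) ^ (1 / p) * ((1 - θ) * A1 + θ * B1) ^ (1 / p) := by
  have hp0 : (0:ℝ) < p := by linarith
  have hθ1' : 0 ≤ 1 - θ := by linarith
  set u := Real.sqrt (A1 * B2) with hu
  set v := Real.sqrt (A2 * B1) with hv
  have hu0 : 0 ≤ u := Real.sqrt_nonneg _
  have hv0 : 0 ≤ v := Real.sqrt_nonneg _
  have hu2 : u ^ 2 = A1 * B2 := Real.sq_sqrt (by positivity)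
  have hv2 : v ^ 2 = A2 * B1 := Real.sq_sqrt (by positivity)
  have huv : u * v = Real.sqrt ((A1 * A2) * (B1 * B2)) := by
    rw [hu, hv, ← Real.sqrt_mul (by positivity)]
    ring_nf
  have key : 2 * (u * v) ≤ A1 * A2 + B1 * B2 := by
    have h1 := sq_nonneg (Real.sqrt (A1 * A2) - Real.sqrt (B1 * B2))
    have h2 : Real.sqrt (A1 * A2) ^ 2 = A1 * A2 := Real.sq_sqrt (by positivity)
    have h3 : Real.sqrt (B1 * B2) ^ 2 = B1 * B2 := Real.sq_sqrt (by positivity)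
    have h4 : Real.sqrt (A1 * A2) * Real.sqrt (B1 * B2) = u * v := by
      rw [huv, ← Real.sqrt_mul (by positivity)]
    nlinarith [h1, h2, h3, h4]
  have hmix1 : (θ * u + (1 - θ) * v) ^ 2 ≤ (θ * A1 + (1 - θ) * B1) * ((1 - θ) * A2 + θ * B2) := by
    nlinarith [mul_nonneg hθ0 hθ1', key, hu2, hv2]
  have hmix2 : (θ * v + (1 - θ) * u) ^ 2 ≤ (θ * A2 + (1 - θ) * B2) * ((1 - θ) * A1 + θ * B1) := by
    nlinarith [mul_nonneg hθ0 hθ1', key, hu2, hv2]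
  -- convert products of rpow
  have e1 : (θ * A1 + (1 - θ) * B1) ^ (1/p) * ((1 - θ) * A2 + θ * B2) ^ (1/p)
      = ((θ * A1 + (1 - θ) * B1) * ((1 - θ) * A2 + θ * B2)) ^ (1/p) := by
    rw [← Real.mul_rpow (by positivity) (by positivity)]
  have e2 : (θ * A2 + (1 - θ) * B2) ^ (1/p) * ((1 - θ) * A1 + θ * B1) ^ (1/p)
      = ((θ * A2 + (1 - θ) * B2) * ((1 - θ) * A1 + θ * B1)) ^ (1/p) := by
    rw [← Real.mul_rpow (by positivity) (by positivity)]
  have sq_rpow : ∀ z : ℝ, 0 ≤ z → (z ^ 2) ^ (1/p) = z ^ (2/p) := by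
    intro z hz
    rw [← Real.rpow_natCast z 2, ← Real.rpow_mul hz,
      show ((2:ℕ):ℝ) * (1/p) = 2/p by push_cast; ring]
  have m1 : (θ * u + (1 - θ) * v) ^ (2/p)
      ≤ (θ * A1 + (1 - θ) * B1) ^ (1/p) * ((1 - θ) * A2 + θ * B2) ^ (1/p) := by
    rw [e1, ← sq_rpow _ (by positivity)]
    exact Real.rpow_le_rpow (by positivity) hmix1 (by positivity)
  have m2 : (θ * v + (1 - θ) * u) ^ (2/p)
      ≤ (θ * A2 + (1 - θ) * B2) ^ (1/p) * ((1 - θ) * A1 + θ * B1) ^ (1/p) := by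
    rw [e2, ← sq_rpow _ (by positivity)]
    exact Real.rpow_le_rpow (by positivity) hmix2 (by positivity)
  have hq0 : (0:ℝ) < 2/p := by positivity
  have hq1 : 2/p ≤ 1 := by
    rw [div_le_one hp0]; linarith
  have c1 : θ * u ^ (2/p) + (1 - θ) * v ^ (2/p) ≤ (θ * u + (1 - θ) * v) ^ (2/p) :=
    concave_rpow_aux hq0 hq1 hθ0 hθ1 hu0 hv0
  have c2 : θ * v ^ (2/p) + (1 - θ) * u ^ (2/p) ≤ (θ * v + (1 - θ) * u) ^ (2/p) :=
    concave_rpow_aux hq0 hq1 hθ0 hθ1 hv0 hu0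
  have hup : u ^ (2/p) = (A1 * B2) ^ (1/p) := by
    rw [hu, Real.sqrt_eq_rpow, ← Real.rpow_mul (by positivity),
      show (1/2) * (2/p) = 1/p by ring]
  have hvp : v ^ (2/p) = (A2 * B1) ^ (1/p) := by
    rw [hv, Real.sqrt_eq_rpow, ← Real.rpow_mul (by positivity),
      show (1/2) * (2/p) = 1/p by ring]
  rw [← hup, ← hvp]
  linarith

lemma prod_update_apply{r n : ℕ} (Y : Fin r → Fin n → ℝ) (s : Fin r) (f : Fin n → ℝ)
    (k : Fin r → Fin n) (S : Finset (Fin r)) (hs : s ∈ S) :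
    ∏ τ ∈ S, (Function.update Y s f) τ (k τ) = f (k s) * ∏ τ ∈ S.erase s, Y τ (k τ) := by
  rw [show S.erase s = S \ {s} from (Finset.sdiff_singleton_eq_erase s S).symm,
    ← Finset.prod_update_of_mem hs (fun τ => Y τ (k τ)) (f (k s))]
  refine Finset.prod_congr rfl (fun τ _ => ?_)
  by_cases h : τ = s
  · subst h; simp
  · simp [h]

lemma step_le {r n : ℕ} (A : (Fin r → Fin n) → ℝ) (hA : ∀ i, 0 ≤ A i)
    (hsym : ∀ (σ : Equiv.Perm (Fin r)) (i : Fin r → Fin n), A (i ∘ σ) = A i)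
    (X : Fin r → Fin n → ℝ) (hX : ∀ t a, 0 ≤ X t a)
    (s t : Fin r) (hst : s ≠ t) (f g f' g' : Fin n → ℝ)
    (hfg : ∀ i j, f i * g j + f j * g i ≤ f' i * g' j + f' j * g' i) :
    linFormC A (Function.update (Function.update X s f) t g)
      ≤ linFormC A (Function.update (Function.update X s f') t g') := by
  classical
  set R : (Fin r → Fin n) → ℝ := fun k => ∏ τ ∈ (univ.erase t).erase s, X τ (k τ) with hR
  have hR0 : ∀ k, 0 ≤ R k := fun k => Finset.prod_nonneg (fun τ _ => hX τ (k τ))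
  have hs' : s ∈ univ.erase t := Finset.mem_erase.2 ⟨hst, Finset.mem_univ s⟩
  have hL : ∀ F G : Fin n → ℝ, linFormC A (Function.update (Function.update X s F) t G)
      = ∑ k : Fin r → Fin n, A k * (F (k s) * G (k t) * R k) := by
    intro F G
    unfold linFormC
    refine Finset.sum_congr rfl (fun k _ => ?_)
    rw [prod_update_apply _ t G k univ (Finset.mem_univ t)]
    rw [prod_update_apply X s F k (univ.erase t) hs']
    ring
  have hswap : ∀ F G : Fin n → ℝ,
      (∑ k : Fin r → Fin n, A k * (F (k s) * G (k t) * R k))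
      = ∑ k : Fin r → Fin n, A k * (F (k t) * G (k s) * R k) := by
    intro F G
    refine Fintype.sum_equiv (Equiv.arrowCongr (Equiv.swap s t) (Equiv.refl (Fin n))) _ _
      (fun k => ?_)
    have he : (Equiv.arrowCongr (Equiv.swap s t) (Equiv.refl (Fin n))) k
        = k ∘ (Equiv.swap s t) := by
      funext τ
      simp [Equiv.arrowCongr]
    rw [he]
    have h1 : (k ∘ (Equiv.swap s t)) s = k t := by simp
    have h2 : (k ∘ (Equiv.swap s t)) t = k s := by simp
    have h3 : R (k ∘ (Equiv.swap s t)) = R k := by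
      refine Finset.prod_congr rfl (fun τ hτ => ?_)
      have hτs : τ ≠ s := (Finset.mem_erase.1 hτ).1
      have hτt : τ ≠ t := (Finset.mem_erase.1 (Finset.mem_erase.1 hτ).2).1
      simp [Function.comp, Equiv.swap_apply_of_ne_of_ne hτs hτt]
    rw [hsym (Equiv.swap s t) k, h1, h2, h3]
  rw [hL f g, hL f' g']
  have key : ∀ k : Fin r → Fin n,
      A k * (f (k s) * g (k t) * R k) + A k * (f (k t) * g (k s) * R k)
      ≤ A k * (f' (k s) * g' (k t) * R k) + A k * (f' (k t) * g' (k s) * R k) := by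
    intro k
    have h := hfg (k s) (k t)
    have hnn : 0 ≤ A k * R k := mul_nonneg (hA k) (hR0 k)
    nlinarith [mul_le_mul_of_nonneg_left h hnn]
  have hsum : (∑ k : Fin r → Fin n, A k * (f (k s) * g (k t) * R k))
      + (∑ k : Fin r → Fin n, A k * (f (k t) * g (k s) * R k))
      ≤ (∑ k : Fin r → Fin n, A k * (f' (k s) * g' (k t) * R k))
      + (∑ k : Fin r → Fin n, A k * (f' (k t) * g' (k s) * R k)) := by
    rw [← Finset.sum_add_distrib, ← Finset.sum_add_distrib]
    exact Finset.sum_le_sum (fun k _ => key k)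
  have e1 := hswap f g
  have e2 := hswap f' g'
  linarith

lemma bddAbove_spec{r n : ℕ} (p : ℝ) (hp : 0 < p) (A : (Fin r → Fin n) → ℝ)
    (hA : ∀ i, 0 ≤ A i) :
    BddAbove {v | ∃ x : Fin n → ℝ, lpNorm p x = 1 ∧ v = |linFormC A (fun _ => x)|} := by
  refine ⟨∑ k : Fin r → Fin n, A k, fun v hv => ?_⟩
  obtain ⟨x, hx1, rfl⟩ := hv
  have h0 : 0 ≤ ∑ a, |x a| ^ p :=
    Finset.sum_nonneg (fun a _ => Real.rpow_nonneg (abs_nonneg _) p)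
  have hsum : ∑ a, |x a| ^ p = 1 := by
    have h := congrArg (fun z : ℝ => z ^ p) hx1
    simp only [lpNorm] at h
    rwa [← Real.rpow_mul h0, one_div, inv_mul_cancel₀ (ne_of_gt hp), Real.rpow_one,
      Real.one_rpow] at h
  have habs : ∀ a, |x a| ≤ 1 := by
    intro a
    by_contra hlt
    push_neg at hlt
    have h1 : 1 < |x a| ^ p :=
      (Real.one_lt_rpow_iff_of_pos (lt_trans one_pos hlt)).2 (Or.inl ⟨hlt, hp⟩)
    have h2 : |x a| ^ p ≤ 1 := by
      rw [← hsum]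
      exact Finset.single_le_sum (fun i _ => Real.rpow_nonneg (abs_nonneg _) p)
        (Finset.mem_univ a)
    linarith
  calc |linFormC A (fun _ => x)| ≤ ∑ k : Fin r → Fin n, |A k * ∏ t, x (k t)| := by
        unfold linFormC; exact Finset.abs_sum_le_sum_abs _ _
    _ ≤ ∑ k : Fin r → Fin n, A k := by
        refine Finset.sum_le_sum (fun k _ => ?_)
        rw [abs_mul, abs_of_nonneg (hA k), Finset.abs_prod]
        have : ∏ t, |x (k t)| ≤ 1 :=
          Finset.prod_le_one (fun t _ => abs_nonneg _) (fun t _ => habs (k t))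
        nlinarith [hA k, this, Finset.prod_nonneg (fun t (_ : t ∈ univ) => abs_nonneg (x (k t)))]

lemma pSpecRad_ge {r n : ℕ} (p : ℝ) (hp : 0 < p) (A : (Fin r → Fin n) → ℝ)
    (hA : ∀ i, 0 ≤ A i) (x : Fin n → ℝ) (hx : lpNorm p x = 1) :
    linFormC A (fun _ => x) ≤ pSpecRad p A :=
  le_trans (le_abs_self _) (le_csSup (bddAbove_spec p hp A hA) ⟨x, hx, rfl⟩)

/-- For a symmetric nonnegative `r`-matrix `A` of order `n` with slice-sums
`S₁, …, S_n` and `p ≥ 2`: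
`ρ⁽ᵖ⁾(A) ≥ n^{1-r/p} ((S₁^{p/(p-1)} + ⋯ + S_n^{p/(p-1)})/n)^{(p-1)/p}`. -/
theorem pSpecRad_lower_bound_sliceSums {r n : ℕ} (hr : 2 ≤ r) {p : ℝ} (hp : 2 ≤ p)
    (A : (Fin r → Fin n) → ℝ) (hA : ∀ i, 0 ≤ A i)
    (hsym : ∀ (σ : Equiv.Perm (Fin r)) (i : Fin r → Fin n), A (i ∘ σ) = A i) :
    (n : ℝ) ^ (1 - (r : ℝ) / p) *
        ((1 / (n : ℝ)) * ∑ a, sliceSum (by omega) A a ^ (p / (p - 1))) ^ ((p - 1) / p)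
      ≤ pSpecRad p A := by
  classical
  have h0r : 0 < r := by omega
  have hp0 : (0:ℝ) < p := by linarith
  have hpne : p ≠ 0 := ne_of_gt hp0
  have hpm : (0:ℝ) < p - 1 := by linarith
  have hexp0 : (p - 1) / p ≠ 0 := by positivity
  show (n : ℝ) ^ (1 - (r : ℝ) / p) *
      ((1 / (n : ℝ)) * ∑ a, sliceSum h0r A a ^ (p / (p - 1))) ^ ((p - 1) / p)
    ≤ pSpecRad p A
  rcases Nat.eq_zero_or_pos n with hn | hn
  · subst hn
    have hset : {v | ∃ x : Fin 0 → ℝ, lpNorm p x = 1 ∧ v = |linFormC A (fun _ => x)|} = ∅ := by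
      ext v
      simp only [Set.mem_setOf_eq, Set.mem_empty_iff_false, iff_false, not_exists]
      intro x ⟨hx, _⟩
      apply absurd hx
      unfold lpNorm
      rw [show (∑ i : Fin 0, |x i| ^ p) = 0 by simp, Real.zero_rpow (by positivity)]
      norm_num
    rw [show ((1 / ((0:ℕ) : ℝ)) * ∑ a : Fin 0, sliceSum h0r A a ^ (p / (p - 1))) = 0 by simp,
      Real.zero_rpow hexp0, mul_zero, pSpecRad, hset, Real.sSup_empty]
  · have hn0 : (0:ℝ) < n := by exact_mod_cast hn
    set S : Fin n → ℝ := sliceSum h0r A with hSdef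
    have hS : ∀ a, 0 ≤ S a := by
      intro a
      refine Finset.sum_nonneg (fun k _ => ?_)
      split
      · exact hA k
      · exact le_refl 0
    set q : ℝ := p / (p - 1) with hq
    set T : ℝ := ∑ a, S a ^ q with hT
    have hT0 : 0 ≤ T := Finset.sum_nonneg (fun a _ => Real.rpow_nonneg (hS a) q)
    set w : ℝ := (n : ℝ)⁻¹ with hw
    have hw0 : 0 < w := by positivity
    have huniform : lpNorm p (fun _ : Fin n => w ^ (1/p)) = 1 := by
      unfold lpNorm
      have : ∀ a : Fin n, |(fun _ : Fin n => w ^ (1/p)) a| ^ p = w := by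
        intro a
        rw [abs_of_nonneg (Real.rpow_nonneg hw0.le _), ← Real.rpow_mul hw0.le, one_div,
          inv_mul_cancel₀ hpne, Real.rpow_one]
      rw [Finset.sum_congr rfl (fun a _ => this a), Finset.sum_const, Finset.card_univ,
        Fintype.card_fin, nsmul_eq_mul, hw, mul_inv_cancel₀ (ne_of_gt hn0), Real.one_rpow]
    rcases eq_or_lt_of_le hT0 with hTz | hTpos
    · rw [← hTz, mul_zero, Real.zero_rpow hexp0, mul_zero]
      calc (0:ℝ) ≤ |linFormC A (fun _ _ => w ^ (1/p))| := abs_nonneg _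
        _ ≤ pSpecRad p A :=
            le_csSup (bddAbove_spec p hp0 A hA) ⟨_, huniform, rfl⟩
    · -- main case: T > 0
      set prof : Fin n → ℝ := fun a => S a ^ q / T with hprof
      have hprof0 : ∀ a, 0 ≤ prof a := fun a => div_nonneg (Real.rpow_nonneg (hS a) q) hT0
      have hprofsum : ∑ a, prof a = 1 := by
        simp only [hprof]
        rw [← Finset.sum_div, ← hT, div_self (ne_of_gt hTpos)]
      set prof' : ℝ → Fin n → ℝ := fun α a => α * prof a + (1 - α) * w with hprof'
      have hprof'0 : ∀ α : ℝ, 0 ≤ α → α ≤ 1 → ∀ a, 0 ≤ prof' α a := by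
        intro α h0 h1 a
        have h2 := hprof0 a
        have h3 := hw0.le
        simp only [hprof']
        nlinarith
      set V : ℝ → Fin n → ℝ := fun α a => (prof' α a) ^ (1/p) with hV
      have hV0 : ∀ α : ℝ, 0 ≤ α → α ≤ 1 → ∀ a, 0 ≤ V α a := fun α h0 h1 a =>
        Real.rpow_nonneg (hprof'0 α h0 h1 a) _
      have hr0 : (0:ℝ) < r := by
        have : (2:ℝ) ≤ (r:ℝ) := by exact_mod_cast hr
        linarith
      have hinvr0 : (0:ℝ) ≤ (r:ℝ)⁻¹ := by positivity
      have h1r : (1:ℝ) ≤ (r:ℝ) := by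
        exact_mod_cast (show 1 ≤ r by omega)
      have hinvr1 : (r:ℝ)⁻¹ ≤ 1 := by
        rw [inv_le_one_iff₀]
        right
        linarith
      set X : ℕ → Fin r → Fin n → ℝ := fun k t => if (t:ℕ) < k then V (r:ℝ)⁻¹
        else if (t:ℕ) = k then V (((r:ℝ) - k)/r) else V 0 with hX
      have hXeval : ∀ (k : ℕ) (τ : Fin r), X k τ = if (τ:ℕ) < k then V (r:ℝ)⁻¹
          else if (τ:ℕ) = k then V (((r:ℝ) - k)/r) else V 0 := fun _ _ => rfl
      have hXnn : ∀ k, k ≤ r → ∀ t a, 0 ≤ X k t a := by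
        intro k hk t a
        have hkr : (k:ℝ) ≤ r := by exact_mod_cast hk
        have hk0 : (0:ℝ) ≤ (k:ℝ) := by positivity
        rw [hXeval]
        split_ifs
        · exact hV0 _ hinvr0 hinvr1 a
        · refine hV0 _ (div_nonneg (by linarith) hr0.le) ?_ a
          rw [div_le_one hr0]
          linarith
        · exact hV0 _ le_rfl zero_le_one a
      have hstep : ∀ k : ℕ, k + 1 ≤ r - 1 → linFormC A (X k) ≤ linFormC A (X (k+1)) := by
        intro k hk
        have hkr1 : k + 1 < r := by omega
        have hkR : (k:ℝ) + 2 ≤ r := by exact_mod_cast (show k + 2 ≤ r by omega)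
        have hk0 : (0:ℝ) ≤ (k:ℝ) := by positivity
        have hrk0 : (0:ℝ) < (r:ℝ) - k := by linarith
        set s : Fin r := ⟨k, by omega⟩ with hsv
        set t : Fin r := ⟨k+1, hkr1⟩ with htv
        have hsval : (s:ℕ) = k := rfl
        have htval : (t:ℕ) = k + 1 := rfl
        have hst : s ≠ t := by
          intro hc
          rw [Fin.ext_iff, hsval, htval] at hc
          omega
        set θ : ℝ := ((r:ℝ) - k)⁻¹ with hθv
        have hθ0 : 0 ≤ θ := by positivity
        have hθ1 : θ ≤ 1 := by
          rw [hθv, inv_le_one_iff₀]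
          right
          linarith
        set αk : ℝ := ((r:ℝ) - k)/r with hαkv
        set αk1 : ℝ := ((r:ℝ) - ((k:ℝ)+1))/r with hαk1v
        have hαk0 : 0 ≤ αk := by positivity
        have hαkb : αk ≤ 1 := by
          rw [hαkv, div_le_one hr0]
          linarith
        have hid1 : ∀ i, θ * prof' αk i + (1 - θ) * prof' 0 i = prof' (r:ℝ)⁻¹ i := by
          intro i
          simp only [hprof', hθv, hαkv]
          field_simp
          ring
        have hid2 : ∀ i, (1 - θ) * prof' αk i + θ * prof' 0 i = prof' αk1 i := by
          intro i
          simp only [hprof', hθv, hαkv, hαk1v]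
          field_simp
          ring
        have hfg : ∀ i j, V αk i * V 0 j + V αk j * V 0 i ≤
            V (r:ℝ)⁻¹ i * V αk1 j + V (r:ℝ)⁻¹ j * V αk1 i := by
          intro i j
          have h := mix_pointwise hp hθ0 hθ1 (hprof'0 αk hαk0 hαkb i)
            (hprof'0 0 le_rfl zero_le_one i) (hprof'0 αk hαk0 hαkb j)
            (hprof'0 0 le_rfl zero_le_one j)
          rw [hid1 i, hid2 j, hid1 j, hid2 i] at h
          rw [Real.mul_rpow (hprof'0 αk hαk0 hαkb i) (hprof'0 0 le_rfl zero_le_one j),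
            Real.mul_rpow (hprof'0 αk hαk0 hαkb j) (hprof'0 0 le_rfl zero_le_one i)] at h
          exact h
        have hXk : X k = Function.update (Function.update (X k) s (V αk)) t (V 0) := by
          funext τ
          rcases eq_or_ne τ t with rfl | hτt
          · rw [Function.update_self, hXeval k t, htval,
              if_neg (show ¬(k+1 < k) by omega), if_neg (show ¬(k+1 = k) by omega)]
          · rw [Function.update_of_ne hτt]
            rcases eq_or_ne τ s with rfl | hτs
            · rw [Function.update_self, hXeval k s, hsval,
                if_neg (show ¬(k < k) by omega), if_pos (show k = k from rfl), hαkv]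
            · rw [Function.update_of_ne hτs]
        have hXk1 : X (k+1) = Function.update (Function.update (X k) s (V (r:ℝ)⁻¹)) t (V αk1) := by
          funext τ
          rcases eq_or_ne τ t with rfl | hτt
          · rw [Function.update_self, hXeval (k+1) t, htval,
              if_neg (show ¬(k+1 < k+1) by omega), if_pos (show k+1 = k+1 from rfl), hαk1v]
            push_cast
            ring_nf
          · rw [Function.update_of_ne hτt]
            rcases eq_or_ne τ s with rfl | hτs
            · rw [Function.update_self, hXeval (k+1) s, hsval,
                if_pos (show k < k+1 by omega)]
            · rw [Function.update_of_ne hτs]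
              have hvt : (τ:ℕ) ≠ k + 1 := by
                intro hc
                apply hτt
                rw [Fin.ext_iff, htval]
                exact hc
              have hvs : (τ:ℕ) ≠ k := by
                intro hc
                apply hτs
                rw [Fin.ext_iff, hsval]
                exact hc
              rw [hXeval (k+1) τ, hXeval k τ]
              rcases lt_or_gt_of_ne hvs with h1 | h1
              · rw [if_pos (show (τ:ℕ) < k+1 by omega), if_pos h1]
              · rw [if_neg (show ¬((τ:ℕ) < k+1) by omega),
                  if_neg (show ¬((τ:ℕ) = k+1) by omega),
                  if_neg (show ¬((τ:ℕ) < k) by omega),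
                  if_neg (show ¬((τ:ℕ) = k) by omega)]
        calc linFormC A (X k)
            = linFormC A (Function.update (Function.update (X k) s (V αk)) t (V 0)) := by
              rw [← hXk]
          _ ≤ linFormC A (Function.update (Function.update (X k) s (V (r:ℝ)⁻¹)) t (V αk1)) :=
              step_le A hA hsym (X k) (hXnn k (by omega)) s t hst _ _ _ _ hfg
          _ = linFormC A (X (k+1)) := by rw [← hXk1]
      have hchain : ∀ k : ℕ, k ≤ r - 1 → linFormC A (X 0) ≤ linFormC A (X k) := by
        intro k
        induction k with
        | zero => intro _; exact le_rfl
        | succ m ih =>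
            intro hk
            exact le_trans (ih (by omega)) (hstep m hk)
      have hXlast : X (r-1) = fun _ => V (r:ℝ)⁻¹ := by
        funext τ
        rw [hXeval]
        by_cases hτ : (τ:ℕ) < r - 1
        · rw [if_pos hτ]
        · have hτe : (τ:ℕ) = r - 1 := by
            have := τ.isLt
            omega
          rw [if_neg hτ, if_pos hτe]
          rw [Nat.cast_sub (by omega : 1 ≤ r)]
          push_cast
          rw [show (r:ℝ) - ((r:ℝ) - 1) = 1 by ring, one_div]
      have hnormz : lpNorm p (V (r:ℝ)⁻¹) = 1 := by
        unfold lpNorm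
        have h1 : ∀ a : Fin n, |V (r:ℝ)⁻¹ a| ^ p = prof' (r:ℝ)⁻¹ a := by
          intro a
          rw [abs_of_nonneg (hV0 _ hinvr0 hinvr1 a)]
          simp only [hV]
          rw [← Real.rpow_mul (hprof'0 _ hinvr0 hinvr1 a), one_div,
            inv_mul_cancel₀ hpne, Real.rpow_one]
        rw [Finset.sum_congr rfl (fun a _ => h1 a)]
        have h2 : ∑ a, prof' (r:ℝ)⁻¹ a = 1 := by
          simp only [hprof']
          rw [Finset.sum_add_distrib, ← Finset.mul_sum, hprofsum, Finset.sum_const,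
            Finset.card_univ, Fintype.card_fin, nsmul_eq_mul, hw]
          field_simp
          ring
        rw [h2, Real.one_rpow]
      set z0 : Fin r := ⟨0, h0r⟩ with hz0v
      have hX0eq : X 0 = fun t : Fin r => if (t:ℕ) = 0 then V 1 else V 0 := by
        funext τ
        rw [hXeval]
        rw [if_neg (by omega : ¬((τ:ℕ) < 0))]
        by_cases h : (τ:ℕ) = 0
        · rw [if_pos h, if_pos h]
          push_cast
          rw [sub_zero, div_self (ne_of_gt hr0)]
        · rw [if_neg h, if_neg h]
      have hprof'1 : ∀ a, prof' 1 a = prof a := by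
        intro a
        simp [hprof']
      have hprof'00 : ∀ a, prof' 0 a = w := by
        intro a
        simp [hprof']
      have hL0 : linFormC A (X 0)
          = w ^ (((r:ℝ) - 1)/p) * ∑ a, S a * (prof a) ^ (1/p) := by
        rw [hX0eq]
        unfold linFormC
        have hterm : ∀ k : Fin r → Fin n,
            (∏ t : Fin r, (if ((t : Fin r):ℕ) = 0 then V 1 else V 0) (k t))
            = V 1 (k z0) * w ^ (((r:ℝ) - 1)/p) := by
          intro k
          rw [← Finset.mul_prod_erase univ _ (Finset.mem_univ z0)]
          have h1 : (if ((z0):ℕ) = 0 then V 1 else V 0) (k z0) = V 1 (k z0) := by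
            rw [if_pos rfl]
          have h2 : ∀ t ∈ univ.erase z0, (if ((t):ℕ) = 0 then V 1 else V 0) (k t)
              = w ^ (1/p) := by
            intro t ht
            have hne : (t:ℕ) ≠ 0 := by
              intro h0
              exact (Finset.mem_erase.1 ht).1 (Fin.ext h0)
            rw [if_neg hne]
            show (prof' 0 (k t)) ^ (1/p) = w ^ (1/p)
            rw [hprof'00]
          rw [h1, Finset.prod_congr rfl h2, Finset.prod_const,
            Finset.card_erase_of_mem (Finset.mem_univ z0), Finset.card_univ, Fintype.card_fin]
          congr 1
          rw [← Real.rpow_natCast (w ^ (1/p)) (r-1), ← Real.rpow_mul hw0.le,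
            Nat.cast_sub (by omega : 1 ≤ r)]
          push_cast
          congr 1
          ring
        rw [Finset.sum_congr rfl (fun k _ => by rw [hterm k])]
        have hmul : ∑ k : Fin r → Fin n, A k * (V 1 (k z0) * w ^ (((r:ℝ)-1)/p))
            = w ^ (((r:ℝ)-1)/p) * ∑ k : Fin r → Fin n, A k * V 1 (k z0) := by
          rw [Finset.mul_sum]
          exact Finset.sum_congr rfl (fun k _ => by ring)
        rw [hmul]
        congr 1
        have hVa : ∀ a, V 1 a = prof a ^ (1/p) := by
          intro a
          show (prof' 1 a) ^ (1/p) = _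
          rw [hprof'1]
        calc ∑ k : Fin r → Fin n, A k * V 1 (k z0)
            = ∑ k : Fin r → Fin n, ∑ a, (if k z0 = a then A k * prof a ^ (1/p) else 0) := by
              refine Finset.sum_congr rfl (fun k _ => ?_)
              rw [Finset.sum_ite_eq univ (k z0) (fun a => A k * prof a ^ (1/p)),
                if_pos (Finset.mem_univ _), hVa]
          _ = ∑ a, ∑ k : Fin r → Fin n, (if k z0 = a then A k * prof a ^ (1/p) else 0) :=
              Finset.sum_comm
          _ = ∑ a, S a * prof a ^ (1/p) := by
              refine Finset.sum_congr rfl (fun a _ => ?_)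
              rw [hSdef]
              unfold sliceSum
              rw [Finset.sum_mul]
              refine Finset.sum_congr rfl (fun k _ => ?_)
              rw [ite_mul, zero_mul, hz0v]
      have hsum2 : ∑ a, S a * (prof a) ^ (1/p) = T ^ (1 - 1/p) := by
        have h1 : ∀ a : Fin n, S a * (prof a) ^ (1/p) = S a ^ q / T ^ (1/p) := by
          intro a
          simp only [hprof]
          rw [Real.div_rpow (Real.rpow_nonneg (hS a) q) hT0,
            ← Real.rpow_mul (hS a), show q * (1/p) = 1/(p-1) by rw [hq]; field_simp,
            ← mul_div_assoc]
          congr 1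
          rw [show q = 1 + 1/(p-1) by rw [hq]; field_simp; try ring,
            Real.rpow_add' (hS a) (by positivity : (1:ℝ) + 1/(p-1) ≠ 0), Real.rpow_one]
        rw [Finset.sum_congr rfl (fun a _ => h1 a), ← Finset.sum_div, ← hT,
          Real.rpow_sub hTpos, Real.rpow_one]
      have hLHS : (n : ℝ) ^ (1 - (r : ℝ) / p) * ((1 / (n : ℝ)) * T) ^ ((p - 1) / p)
          = w ^ (((r:ℝ) - 1)/p) * T ^ (1 - 1/p) := by
        rw [one_div, ← hw, Real.mul_rpow hw0.le hT0,
          show (p-1)/p = 1 - 1/p by field_simp, ← mul_assoc]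
        congr 1
        rw [hw, ← Real.rpow_neg_one (n:ℝ), ← Real.rpow_mul hn0.le, ← Real.rpow_mul hn0.le,
          ← Real.rpow_add hn0]
        congr 1
        field_simp
        try ring
      calc (n:ℝ) ^ (1-(r:ℝ)/p) * ((1/(n:ℝ)) * T) ^ ((p-1)/p)
          = w ^ (((r:ℝ)-1)/p) * T ^ (1-1/p) := hLHS
        _ = linFormC A (X 0) := by rw [hL0, hsum2]
        _ ≤ linFormC A (X (r-1)) := hchain (r-1) le_rfl
        _ = linFormC A (fun _ => V (r:ℝ)⁻¹) := by rw [hXlast]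
        _ ≤ pSpecRad p A := pSpecRad_ge p hp0 A hA _ hnormz
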